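/- There is an isomorphism of Λ-algebras End_Λ(R) ≅ M_{n!}(Λ) between the algebra of Λ-linear endomorphisms of R = ℂ[x_1,…,x_n] (Λ the symmetric polynomials) and the n! × n! matrix algebra over Λ. -/

import Mathlib

set_option synthInstance.maxHeartbeats 4000000
set_option maxHeartbeats 4000000

open MvPolynomial Finset

namespace SymmFree
noncomputable section
variable (n : ℕ)


/-- Subalgebra of polynomials invariant under all permutations fixing indices `≥ k`. -/
def fixSub (k : ℕ) : Subalgebra ℂ (MvPolynomial (Fin n) ℂ) where
  carrier := {p | ∀ e : Equiv.Perm (Fin n), (∀ i : Fin n, k ≤ i.val → e i = i) → rename e p = p}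
  mul_mem' := fun ha hb e he => by rw [map_mul, ha e he, hb e he]
  add_mem' := fun ha hb e he => by rw [map_add, ha e he, hb e he]
  one_mem' := fun e he => map_one _
  zero_mem' := fun e he => map_zero _
  algebraMap_mem' := fun r e he => by
    simp [MvPolynomial.algebraMap_eq]

lemma mem_fixSub_iff {k : ℕ} {p : MvPolynomial (Fin n) ℂ} :
    p ∈ fixSub n k ↔ ∀ e : Equiv.Perm (Fin n), (∀ i : Fin n, k ≤ i.val → e i = i) →
      rename e p = p := Iff.rfl

lemma fixSub_le {k : ℕ} : fixSub n (k + 1) ≤ fixSub n k := by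
  intro p hp e he
  exact hp e fun i hi => he i (le_trans (Nat.le_succ k) hi)

lemma fixSub_one_eq_top (hn : 1 ≤ n) : fixSub n 1 = ⊤ := by
  refine le_antisymm le_top ?_
  intro p _ e he
  have h0 : ∀ i : Fin n, e i = i := by
    intro i
    rcases Nat.eq_zero_or_pos i.val with h | h
    · by_contra hne
      have h1 : 1 ≤ (e i).val := by
        rcases Nat.eq_zero_or_pos (e i).val with h' | h'
        · exact absurd (Fin.ext (h'.trans h.symm) : e i = i) hne
        · exact h'
      have := he (e i) h1
      exact hne (e.injective this)
    · exact he i h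
  have : e = Equiv.refl (Fin n) := Equiv.ext h0
  rw [this]
  show rename (⇑(Equiv.refl (Fin n))) p = p
  rw [Equiv.coe_refl, rename_id, AlgHom.id_apply]

lemma fixSub_eq_symmetric : fixSub n n = symmetricSubalgebra (Fin n) ℂ := by
  ext p
  rw [mem_fixSub_iff, mem_symmetricSubalgebra]
  constructor
  · intro h e; exact h e fun i hi => absurd i.2 (not_lt.2 hi)
  · intro h e _; exact h e

/-- Elementary symmetric polynomial in the variables indexed by a finset. -/
noncomputable def esF (s : Finset (Fin n)) (j : ℕ) : MvPolynomial (Fin n) ℂ :=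
  ∑ A ∈ s.powersetCard j, ∏ i ∈ A, X i

lemma esF_zero (s : Finset (Fin n)) : esF n s 0 = 1 := by
  simp [esF]

lemma esF_map {α : Type*} (f : α ↪ Fin n) (u : Finset α) (j : ℕ) :
    esF n (u.map f) j = ∑ A ∈ u.powersetCard j, ∏ i ∈ A, X (f i) := by
  rw [esF, Finset.powersetCard_map, Finset.sum_map]
  refine Finset.sum_congr rfl fun A hA => ?_
  show ∏ i ∈ A.map f, X i = ∏ i ∈ A, X (f i)
  rw [Finset.prod_map]

lemma rename_esF (g : Equiv.Perm (Fin n)) (s : Finset (Fin n)) (j : ℕ) :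
    rename g (esF n s j) = esF n (s.image g) j := by
  classical
  have himg : s.image ⇑g = s.map ⟨⇑g, g.injective⟩ := by
    rw [Finset.map_eq_image]; rfl
  rw [himg, esF_map, esF, map_sum]
  refine Finset.sum_congr rfl fun A hA => ?_
  rw [map_prod]
  simp [rename_X]

lemma esF_insert {a : Fin n} {s : Finset (Fin n)} (ha : a ∉ s) (j : ℕ) :
    esF n (insert a s) (j + 1) = esF n s (j + 1) + X a * esF n s (j : ℕ) := by
  classical
  rw [esF, Finset.powersetCard_succ_insert ha, Finset.sum_union, esF, esF, Finset.mul_sum]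
  · congr 1
    rw [Finset.sum_image]
    · refine Finset.sum_congr rfl fun A hA => ?_
      have haA : a ∉ A := fun h => ha ((Finset.mem_powersetCard.1 hA).1 h)
      rw [Finset.prod_insert haA]
    · intro A hA B hB hAB
      have haA : a ∉ A := fun h => ha ((Finset.mem_powersetCard.1 hA).1 h)
      have haB : a ∉ B := fun h => ha ((Finset.mem_powersetCard.1 hB).1 h)
      have := congrArg (Finset.erase · a) hAB
      simpa [Finset.erase_insert, haA, haB] using this
  · rw [Finset.disjoint_left]
    intro A hA hA'
    rcases Finset.mem_image.1 hA' with ⟨B, hB, rfl⟩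
    have : a ∈ (insert a B : Finset (Fin n)) := Finset.mem_insert_self a B
    exact ha ((Finset.mem_powersetCard.1 hA).1 this)

lemma esF_multiset (s : Finset (Fin n)) (j : ℕ) :
    (s.val.map (X : Fin n → MvPolynomial (Fin n) ℂ)).esymm j = esF n s j := by
  rw [Finset.esymm_map_val]; rfl

/-- Vieta: evaluation of `∏ (X_i - X_a)` at a member of `s` kills the product. -/
lemma esF_vieta {a : Fin n} {s : Finset (Fin n)} (ha : a ∈ s) :
    ∑ j ∈ Finset.range (s.card + 1), esF n s j * (- X a) ^ (s.card - j) = 0 := by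
  classical
  have hv := Multiset.prod_X_add_C_eq_sum_esymm
    (s.val.map (X : Fin n → MvPolynomial (Fin n) ℂ))
  have hcard : Multiset.card (s.val.map (X : Fin n → MvPolynomial (Fin n) ℂ)) = s.card := by simp
  have := congrArg (Polynomial.eval (- X a)) hv
  rw [Polynomial.eval_multiset_prod] at this
  have hzero : (Multiset.map (Polynomial.eval (-X a)) ((s.val.map (X : Fin n → MvPolynomial (Fin n) ℂ)).map
      fun r => Polynomial.X + Polynomial.C r)).prod = 0 := by
    refine Multiset.prod_eq_zero ?_
    rw [Multiset.map_map, Multiset.map_map]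
    refine Multiset.mem_map.2 ⟨a, ha, ?_⟩
    simp
  rw [hzero] at this
  rw [Polynomial.eval_finset_sum] at this
  simp only [Polynomial.eval_mul, Polynomial.eval_C, Polynomial.eval_pow, Polynomial.eval_X,
    hcard, esF_multiset] at this
  exact this.symm



lemma subalg_smul {S : Subalgebra ℂ (MvPolynomial (Fin n) ℂ)} (a : S)
    (x : MvPolynomial (Fin n) ℂ) : a • x = (a : MvPolynomial (Fin n) ℂ) * x := by
  rw [Algebra.smul_def]; rfl

/-- the finset `{0, …, k-1}` inside `Fin n`. -/
def fir (k : ℕ) (h : k ≤ n) : Finset (Fin n) :=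
  Finset.univ.map (Fin.castLEEmb h)

lemma mem_fir {k : ℕ} {h : k ≤ n} {i : Fin n} : i ∈ fir n k h ↔ i.val < k := by
  simp only [fir, Finset.mem_map, Finset.mem_univ, true_and]
  constructor
  · rintro ⟨j, rfl⟩; exact j.2
  · intro hi; exact ⟨⟨i.val, hi⟩, by ext; simp [Fin.castLEEmb]⟩

lemma card_fir {k : ℕ} (h : k ≤ n) : (fir n k h).card = k := by
  simp [fir]

lemma fir_succ {k : ℕ} (h : k + 1 ≤ n) :
    fir n (k+1) h = insert ⟨k, h⟩ (fir n k (Nat.le_of_succ_le h)) := by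
  ext i
  simp only [mem_fir, Finset.mem_insert]
  constructor
  · intro hi
    rcases Nat.lt_succ_iff_lt_or_eq.1 hi with h' | h'
    · exact Or.inr h'
    · exact Or.inl (Fin.ext h')
  · rintro (rfl | h')
    · exact Nat.lt_succ_self k
    · exact Nat.lt_succ_of_lt h'

lemma not_mem_fir {k : ℕ} (h : k + 1 ≤ n) :
    (⟨k, h⟩ : Fin n) ∉ fir n k (Nat.le_of_succ_le h) := by
  rw [mem_fir]; simp

lemma image_fir {k : ℕ} {h : k ≤ n} {e : Equiv.Perm (Fin n)}
    (he : ∀ i : Fin n, k ≤ i.val → e i = i) : (fir n k h).image e = fir n k h := by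
  have hsub : (fir n k h).image e ⊆ fir n k h := by
    intro j hj
    rcases Finset.mem_image.1 hj with ⟨i, hi, rfl⟩
    rw [mem_fir] at hi ⊢
    by_contra hge
    have h1 : k ≤ (e i).val := Nat.le_of_not_lt hge
    have := he (e i) h1
    have := e.injective this
    rw [this] at h1
    exact absurd hi (Nat.not_lt.2 h1)
  refine Finset.eq_of_subset_of_card_le hsub ?_
  rw [Finset.card_image_of_injective _ e.injective]

lemma esF_fir_mem {k : ℕ} (h : k ≤ n) (j : ℕ) : esF n (fir n k h) j ∈ fixSub n k := by
  rw [mem_fixSub_iff]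
  intro e he
  rw [rename_esF, image_fir n he]

section Step
variable (k : ℕ) (hk : k + 1 ≤ n)

/-- the variable `x_k`. -/
def xk : MvPolynomial (Fin n) ℂ := X (⟨k, hk⟩ : Fin n)

/-- span of `1, x_k, …, x_k^k` over the invariants of `S_{k+1}`. -/
def P : Submodule (fixSub n (k+1)) (MvPolynomial (Fin n) ℂ) :=
  Submodule.span (fixSub n (k+1)) (Set.range fun j : Fin (k+1) => xk n k hk ^ (j : ℕ))

lemma pow_le_mem_P {m : ℕ} (hm : m ≤ k) : xk n k hk ^ m ∈ P n k hk :=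
  Submodule.subset_span ⟨⟨m, Nat.lt_succ_of_le hm⟩, rfl⟩

lemma one_mem_P : (1 : MvPolynomial (Fin n) ℂ) ∈ P n k hk := by
  simpa using pow_le_mem_P n k hk (Nat.zero_le k)

lemma fix_mem_P {c : MvPolynomial (Fin n) ℂ} (hc : c ∈ fixSub n (k+1)) : c ∈ P n k hk := by
  have : c = (⟨c, hc⟩ : fixSub n (k+1)) • (1 : MvPolynomial (Fin n) ℂ) := by
    rw [subalg_smul]; simp
  rw [this]
  exact Submodule.smul_mem _ _ (one_mem_P n k hk)

lemma fix_mul_pow_mem_P {c : MvPolynomial (Fin n) ℂ} (hc : c ∈ fixSub n (k+1)) {m : ℕ}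
    (hm : m ≤ k) : c * xk n k hk ^ m ∈ P n k hk := by
  have : c * xk n k hk ^ m = (⟨c, hc⟩ : fixSub n (k+1)) • (xk n k hk ^ m) := by
    rw [subalg_smul]
  rw [this]
  exact Submodule.smul_mem _ _ (pow_le_mem_P n k hk hm)

lemma xk_pow_succ_mem_P : xk n k hk ^ (k + 1) ∈ P n k hk := by
  classical
  set s : Finset (Fin n) := fir n (k+1) hk with hs
  have hcard : s.card = k + 1 := card_fir n hk
  have ha : (⟨k, hk⟩ : Fin n) ∈ s := by rw [hs, mem_fir]; exact Nat.lt_succ_self k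
  have h0 := esF_vieta n ha
  rw [hcard] at h0
  rw [Finset.sum_range_succ'] at h0
  simp only [Nat.succ_sub_succ_eq_sub, Nat.sub_zero, esF_zero, one_mul] at h0
  have hneg : (- xk n k hk) ^ (k+1) = (-1 : MvPolynomial (Fin n) ℂ)^(k+1) * xk n k hk ^ (k+1) := by
    rw [neg_pow]
  rw [show (- X (⟨k, hk⟩ : Fin n)) = - xk n k hk from rfl] at h0
  rw [hneg] at h0
  have h2 : ((-1 : MvPolynomial (Fin n) ℂ)^(k+1)) * ((-1 : MvPolynomial (Fin n) ℂ)^(k+1)) = 1 := by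
    rw [← pow_add]; exact Even.neg_one_pow ⟨k+1, by ring⟩
  set S : MvPolynomial (Fin n) ℂ :=
    ∑ j ∈ Finset.range (k+1), esF n s (j+1) * (- xk n k hk) ^ (k - j) with hSdef
  have hG : xk n k hk ^ (k+1) = ((-1 : MvPolynomial (Fin n) ℂ)^(k+1)) * (- S) := by
    linear_combination ((-1 : MvPolynomial (Fin n) ℂ)^(k+1)) * h0 - xk n k hk ^ (k+1) * h2
  have hSP : S ∈ P n k hk := by
    rw [hSdef]
    refine Submodule.sum_mem _ ?_
    intro j hj
    rw [Finset.mem_range] at hj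
    have hmem : esF n s (j+1) * (-1 : MvPolynomial (Fin n) ℂ)^(k-j) ∈ fixSub n (k+1) :=
      mul_mem (esF_fir_mem n hk (j+1)) (pow_mem (neg_mem (one_mem _)) _)
    have : esF n s (j+1) * (- xk n k hk) ^ (k - j)
        = (esF n s (j+1) * (-1 : MvPolynomial (Fin n) ℂ)^(k-j)) * xk n k hk ^ (k-j) := by
      rw [neg_pow]; ring
    rw [this]
    exact fix_mul_pow_mem_P n k hk hmem (Nat.sub_le k j)
  rw [hG]
  have hmem2 : ((-1 : MvPolynomial (Fin n) ℂ)^(k+1)) ∈ fixSub n (k+1) :=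
    pow_mem (neg_mem (one_mem _)) _
  have : ((-1 : MvPolynomial (Fin n) ℂ)^(k+1)) * (- S)
      = (⟨_, hmem2⟩ : fixSub n (k+1)) • (- S) := by rw [subalg_smul]
  rw [this]
  exact Submodule.smul_mem _ _ (Submodule.neg_mem _ hSP)

lemma xk_mul_mem_P {q : MvPolynomial (Fin n) ℂ} (hq : q ∈ P n k hk) :
    xk n k hk * q ∈ P n k hk := by
  refine Submodule.span_induction ?_ ?_ ?_ ?_ hq
  · rintro x ⟨j, rfl⟩
    show xk n k hk * xk n k hk ^ (j : ℕ) ∈ P n k hk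
    rcases Nat.lt_or_ge (j : ℕ) k with h | h
    · rw [← pow_succ']
      exact pow_le_mem_P n k hk h
    · have hj : (j : ℕ) = k := le_antisymm (Nat.lt_succ_iff.1 j.2) h
      rw [hj, ← pow_succ']
      exact xk_pow_succ_mem_P n k hk
  · simp
  · intro x y _ _ hx hy
    rw [mul_add]; exact Submodule.add_mem _ hx hy
  · intro a x _ hx
    rw [mul_smul_comm]; exact Submodule.smul_mem _ _ hx

lemma pow_mul_mem_P (m : ℕ) {q : MvPolynomial (Fin n) ℂ} (hq : q ∈ P n k hk) :
    xk n k hk ^ m * q ∈ P n k hk := by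
  induction m with
  | zero => simpa using hq
  | succ m ih =>
    rw [pow_succ', mul_assoc]
    exact xk_mul_mem_P n k hk ih

lemma mul_mem_P {p q : MvPolynomial (Fin n) ℂ} (hp : p ∈ P n k hk) (hq : q ∈ P n k hk) :
    p * q ∈ P n k hk := by
  refine Submodule.span_induction ?_ ?_ ?_ ?_ hp
  · rintro x ⟨j, rfl⟩
    exact pow_mul_mem_P n k hk _ hq

  · simp
  · intro x y _ _ hx hy
    rw [add_mul]; exact Submodule.add_mem _ hx hy
  · intro a x _ hx
    rw [smul_mul_assoc]; exact Submodule.smul_mem _ _ hx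

/-- the index equivalence splitting `Fin n` as first `k` and the rest. -/
def eqv : (Fin k ⊕ Fin (n - k)) ≃ Fin n :=
  finSumFinEquiv.trans (finCongr (by omega))

lemma eqv_inl (i : Fin k) : (eqv n k hk (Sum.inl i)).val = i.val := by
  simp [eqv]

lemma eqv_inr (j : Fin (n - k)) : (eqv n k hk (Sum.inr j)).val = k + j.val := by
  simp [eqv]

/-- the coefficient ring: polynomials in the remaining variables. -/
abbrev R0 := MvPolynomial (Fin (n - k)) ℂ

/-- the splitting isomorphism. -/
def Phi : MvPolynomial (Fin k) (R0 n k) ≃ₐ[ℂ] MvPolynomial (Fin n) ℂ :=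
  (sumAlgEquiv ℂ (Fin k) (Fin (n - k))).symm.trans (renameEquiv ℂ (eqv n k hk))

lemma Phi_apply (w : MvPolynomial (Fin k) (R0 n k)) :
    Phi n k hk w = rename (eqv n k hk) (iterToSum ℂ (Fin k) (Fin (n-k)) w) := by
  show rename (eqv n k hk) ((sumAlgEquiv ℂ (Fin k) (Fin (n - k))).symm w) = _
  congr 1
  induction w using MvPolynomial.induction_on with
  | C r =>
    induction r using MvPolynomial.induction_on with
    | C a => rw [iterToSum_C_C, sumAlgEquiv_symm_C_C]
    | add p q hp hq => simp only [map_add, hp, hq]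
    | mul_X p i hp => simp only [map_mul, hp, sumAlgEquiv_symm_C_X, iterToSum_C_X]
  | add p q hp hq => simp only [map_add, hp, hq]
  | mul_X p i hp => simp only [map_mul, hp, sumAlgEquiv_symm_X, iterToSum_X]

lemma Phi_X (i : Fin k) : Phi n k hk (X i) = X (eqv n k hk (Sum.inl i)) := by
  rw [Phi_apply, iterToSum_X, rename_X]

lemma Phi_C (r : R0 n k) :
    Phi n k hk (C r) = rename (fun j => eqv n k hk (Sum.inr j)) r := by
  have h : ((Phi n k hk).toAlgHom.toRingHom).comp
        (C : R0 n k →+* MvPolynomial (Fin k) (R0 n k))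
      = (rename (fun j => eqv n k hk (Sum.inr j)) :
          MvPolynomial (Fin (n-k)) ℂ →ₐ[ℂ] MvPolynomial (Fin n) ℂ).toRingHom := by
    apply MvPolynomial.ringHom_ext
    · intro a
      simp only [RingHom.comp_apply, AlgHom.toRingHom_eq_coe, RingHom.coe_coe]
      rw [rename_C]
      exact (show Phi n k hk (C (C a)) = C a by rw [Phi_apply, iterToSum_C_C, rename_C])
    · intro j
      simp only [RingHom.comp_apply, AlgHom.toRingHom_eq_coe, RingHom.coe_coe]
      rw [rename_X]
      exact (show Phi n k hk (C (X j)) = X (eqv n k hk (Sum.inr j)) by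
        rw [Phi_apply, iterToSum_C_X, rename_X])
  exact RingHom.congr_fun h r

/-- extension of a permutation of the first `k` coordinates. -/
def pext (g : Equiv.Perm (Fin k)) : Equiv.Perm (Fin n) :=
  (eqv n k hk).symm.trans ((Equiv.sumCongr g (Equiv.refl (Fin (n-k)))).trans (eqv n k hk))

lemma pext_apply_inl (g : Equiv.Perm (Fin k)) (i : Fin k) :
    pext n k hk g (eqv n k hk (Sum.inl i)) = eqv n k hk (Sum.inl (g i)) := by
  simp [pext]

lemma pext_apply_inr (g : Equiv.Perm (Fin k)) (j : Fin (n-k)) :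
    pext n k hk g (eqv n k hk (Sum.inr j)) = eqv n k hk (Sum.inr j) := by
  simp [pext]

lemma pext_fixes (g : Equiv.Perm (Fin k)) (i : Fin n) (hi : k ≤ i.val) :
    pext n k hk g i = i := by
  have h := (eqv n k hk).apply_symm_apply i
  rcases hu : (eqv n k hk).symm i with a | b
  · exfalso
    rw [hu] at h
    have := eqv_inl n k hk a
    rw [h] at this
    omega
  · rw [hu] at h
    conv_lhs => rw [← h]
    rw [pext_apply_inr]
    exact h

lemma Phi_rename (g : Equiv.Perm (Fin k)) (w : MvPolynomial (Fin k) (R0 n k)) :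
    Phi n k hk (rename g w) = rename (pext n k hk g) (Phi n k hk w) := by
  induction w using MvPolynomial.induction_on with
  | C r =>
    rw [rename_C, Phi_C, rename_rename,
      show (⇑(pext n k hk g) ∘ fun j => eqv n k hk (Sum.inr j))
          = (fun j => eqv n k hk (Sum.inr j)) from
        funext fun j => pext_apply_inr n k hk g j]
  | add p q hp hq => rw [map_add, map_add, map_add, hp, hq, map_add]
  | mul_X p i hp =>
    conv_lhs => rw [map_mul, rename_X, map_mul, Phi_X, hp]
    conv_rhs => rw [map_mul, Phi_X, map_mul, rename_X, pext_apply_inl]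

/-- the image of the elementary symmetric polynomials of `Fin k` under `Phi`. -/
lemma Phi_esymm (m : ℕ) (h' : k ≤ n) :
    Phi n k hk (esymm (Fin k) (R0 n k) m) = esF n (fir n k h') m := by
  have hinj : Function.Injective (fun i : Fin k => eqv n k hk (Sum.inl i)) := by
    intro a b hab
    have := congrArg Fin.val hab
    rw [eqv_inl, eqv_inl] at this
    exact Fin.ext this
  have hfir : fir n k h' = Finset.univ.map ⟨fun i : Fin k => eqv n k hk (Sum.inl i), hinj⟩ := by
    ext i
    rw [mem_fir]
    simp only [Finset.mem_map, Finset.mem_univ, true_and, Function.Embedding.coeFn_mk]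
    constructor
    · intro hi
      refine ⟨⟨i.val, hi⟩, ?_⟩
      ext
      rw [eqv_inl]
    · rintro ⟨j, rfl⟩
      rw [eqv_inl]
      exact j.2
  rw [hfir, esF_map, esymm, map_sum]
  refine Finset.sum_congr rfl fun A hA => ?_
  rw [map_prod]
  refine Finset.prod_congr rfl fun i hi => ?_
  rw [Phi_X]
  rfl

/-- the elementary symmetric polynomials of the first `k` variables lie in `P`. -/
lemma esF_fir_mem_P (m : ℕ) : esF n (fir n k (Nat.le_of_succ_le hk)) m ∈ P n k hk := by
  induction m with
  | zero => rw [esF_zero]; exact one_mem_P n k hk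
  | succ m ih =>
    have hins := esF_insert n (not_mem_fir n hk) m
    rw [← fir_succ n hk] at hins
    have h1 : esF n (fir n k (Nat.le_of_succ_le hk)) (m+1)
        = esF n (fir n (k+1) hk) (m+1) - xk n k hk * esF n (fir n k (Nat.le_of_succ_le hk)) m := by
      rw [hins, show xk n k hk = X (⟨k, hk⟩ : Fin n) from rfl]; ring
    rw [h1]
    refine Submodule.sub_mem _ ?_ ?_
    · exact fix_mem_P n k hk (esF_fir_mem n hk (m+1))
    · exact xk_mul_mem_P n k hk ih

/-- Main step lemma: every `S_k`-invariant polynomial lies in the span of `1, x_k, …, x_k^k`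
over the `S_{k+1}`-invariants. -/
lemma fix_mem_P_of_fix (hk1 : 1 ≤ k) {p : MvPolynomial (Fin n) ℂ} (hp : p ∈ fixSub n k) :
    p ∈ P n k hk := by
  classical
  set q : MvPolynomial (Fin k) (R0 n k) := (Phi n k hk).symm p with hq
  have hPq : Phi n k hk q = p := (Phi n k hk).apply_symm_apply p
  have hsym : q.IsSymmetric := by
    intro g
    apply (Phi n k hk).injective
    rw [Phi_rename, hPq]
    rw [mem_fixSub_iff] at hp
    exact hp (pext n k hk g) (pext_fixes n k hk g)
  obtain ⟨w, hw⟩ := esymmAlgHom_surjective (σ := Fin k) (R := R0 n k) (n := k)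
    (by rw [Fintype.card_fin]) ⟨q, hsym⟩
  have hwval : aeval (fun i : Fin k => esymm (Fin k) (R0 n k) ((i : ℕ) + 1)) w = q := by
    have := congrArg Subtype.val hw
    rwa [esymmAlgHom_apply] at this
  -- the composite algebra homomorphism
  set E : Fin k → MvPolynomial (Fin k) (R0 n k) :=
    fun i => esymm (Fin k) (R0 n k) ((i : ℕ) + 1) with hE
  set χ : MvPolynomial (Fin k ⊕ Fin (n - k)) ℂ →ₐ[ℂ] MvPolynomial (Fin n) ℂ :=
    ((Phi n k hk).toAlgHom.comp
      (((aeval E : MvPolynomial (Fin k) (R0 n k) →ₐ[R0 n k]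
          MvPolynomial (Fin k) (R0 n k)).restrictScalars ℂ))).comp
      (sumAlgEquiv ℂ (Fin k) (Fin (n - k))).toAlgHom with hχ
  set w' : MvPolynomial (Fin k ⊕ Fin (n - k)) ℂ :=
    (sumAlgEquiv ℂ (Fin k) (Fin (n - k))).symm w with hw'
  have hpw : p = χ w' := by
    rw [hχ, hw']
    simp only [AlgHom.coe_comp, Function.comp_apply, AlgEquiv.toAlgHom_eq_coe, AlgHom.coe_coe,
      AlgEquiv.apply_symm_apply, AlgHom.coe_restrictScalars']
    rw [show ((sumAlgEquiv ℂ (Fin k) (Fin (n - k))) : _ →ₐ[ℂ] _)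
        ((sumAlgEquiv ℂ (Fin k) (Fin (n - k))).symm w) = w from
        (sumAlgEquiv ℂ (Fin k) (Fin (n - k))).apply_symm_apply w, hwval]
    exact hPq.symm
  have hrange : p ∈ Algebra.adjoin ℂ (Set.range (⇑χ ∘ X)) := by
    rw [Algebra.adjoin_range_eq_range_aeval]
    exact ⟨w', by rw [hpw]; exact (AlgHom.congr_fun (aeval_unique χ).symm w')⟩
  have hgen : ∀ u : Fin k ⊕ Fin (n - k), χ (X u) ∈ P n k hk := by
    intro u
    have hsum : ∀ v : Fin k ⊕ Fin (n-k),
        (sumAlgEquiv ℂ (Fin k) (Fin (n - k))) (X v) = sumToIter ℂ _ _ (X v) := fun v => by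
        rcases v with a | b <;> simp [sumToIter_Xl, sumToIter_Xr]
    rcases u with i | j
    · have : χ (X (Sum.inl i)) = Phi n k hk (esymm (Fin k) (R0 n k) ((i : ℕ) + 1)) := by
        rw [hχ]
        simp only [AlgHom.coe_comp, Function.comp_apply, AlgEquiv.toAlgHom_eq_coe, AlgHom.coe_coe,
          AlgHom.coe_restrictScalars']
        erw [hsum]
        rw [sumToIter_Xl, aeval_X, hE]
        rfl
      rw [this, Phi_esymm n k hk _ (Nat.le_of_succ_le hk)]
      exact esF_fir_mem_P n k hk _
    · have : χ (X (Sum.inr j)) = X (eqv n k hk (Sum.inr j)) := by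
        rw [hχ]
        simp only [AlgHom.coe_comp, Function.comp_apply, AlgEquiv.toAlgHom_eq_coe, AlgHom.coe_coe,
          AlgHom.coe_restrictScalars']
        erw [hsum]
        rw [sumToIter_Xr, aeval_C]
        rw [show (algebraMap (R0 n k) (MvPolynomial (Fin k) (R0 n k))) (X j) = C (X j) from rfl]
        erw [Phi_C]
        rw [rename_X]
      rw [this]
      rcases Nat.eq_zero_or_pos j.val with hj | hj
      · have hx : eqv n k hk (Sum.inr j) = (⟨k, hk⟩ : Fin n) := by
          ext; rw [eqv_inr, hj]; simp
        rw [hx]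
        have : X (⟨k, hk⟩ : Fin n) = xk n k hk ^ 1 := by
          rw [pow_one]; rfl
        rw [this]
        exact pow_le_mem_P n k hk hk1
      · have hx : (eqv n k hk (Sum.inr j)).val ≥ k + 1 := by
          rw [eqv_inr]; omega
        refine fix_mem_P n k hk ?_
        rw [mem_fixSub_iff]
        intro e he
        rw [rename_X, he _ hx]
  refine Algebra.adjoin_induction ?_ ?_ ?_ ?_ hrange
  · rintro x ⟨u, rfl⟩
    exact hgen u
  · intro r
    refine fix_mem_P n k hk ?_
    exact Subalgebra.algebraMap_mem _ r
  · intro x y _ _ hx hy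
    exact Submodule.add_mem _ hx hy
  · intro x y _ _ hx hy
    exact mul_mem_P n k hk hx hy

lemma xk_pow_mem_P (m : ℕ) : xk n k hk ^ m ∈ P n k hk := by
  induction m with
  | zero => simpa using one_mem_P n k hk
  | succ m ih => rw [pow_succ'] ; exact xk_mul_mem_P n k hk ih

lemma xk_mem_fix : xk n k hk ∈ fixSub n k := by
  rw [mem_fixSub_iff]
  intro e he
  rw [show xk n k hk = X (⟨k, hk⟩ : Fin n) from rfl, rename_X, he _ (le_refl k)]

/-- Vandermonde independence of the powers of `x_k` over the `S_{k+1}`-invariants. -/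
lemma vandermonde_indep (c : Fin (k+1) → MvPolynomial (Fin n) ℂ)
    (hc : ∀ j, c j ∈ fixSub n (k+1))
    (h0 : ∑ j : Fin (k+1), c j * xk n k hk ^ (j : ℕ) = 0) : ∀ j, c j = 0 := by
  classical
  set v : Fin (k+1) → MvPolynomial (Fin n) ℂ :=
    fun i => X (⟨i.val, lt_of_lt_of_le i.2 hk⟩ : Fin n) with hv
  have hvinj : Function.Injective v := by
    intro a b hab
    have h2 := MvPolynomial.X_injective hab
    have h3 := congrArg Fin.val h2
    exact Fin.ext h3
  have hrow : ∀ i : Fin (k+1), ∑ j : Fin (k+1), c j * v i ^ (j : ℕ) = 0 := by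
    intro i
    set σ : Equiv.Perm (Fin n) :=
      Equiv.swap (⟨i.val, lt_of_lt_of_le i.2 hk⟩ : Fin n) (⟨k, hk⟩ : Fin n) with hσ
    have hσfix : ∀ m : Fin n, k + 1 ≤ m.val → σ m = m := by
      intro m hm
      refine Equiv.swap_apply_of_ne_of_ne ?_ ?_
      · intro h; rw [h] at hm; simp at hm; omega
      · intro h; rw [h] at hm; simp at hm
    have := congrArg (rename σ) h0
    rw [map_zero, map_sum] at this
    have heach : ∀ j : Fin (k+1),
        rename σ (c j * xk n k hk ^ (j : ℕ)) = c j * v i ^ (j : ℕ) := by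
      intro j
      rw [map_mul, map_pow]
      rw [(mem_fixSub_iff n).1 (hc j) σ hσfix]
      rw [show xk n k hk = X (⟨k, hk⟩ : Fin n) from rfl, rename_X]
      rw [hσ, Equiv.swap_apply_right]
    rw [Finset.sum_congr rfl fun j _ => heach j] at this
    exact this
  -- Vandermonde matrix argument
  set M : Matrix (Fin (k+1)) (Fin (k+1)) (MvPolynomial (Fin n) ℂ) := Matrix.vandermonde v
  have hMc : M.mulVec c = 0 := by
    funext i
    rw [Matrix.mulVec, dotProduct]
    simp only [Matrix.vandermonde_apply, M]
    rw [show ∑ j : Fin (k+1), v i ^ (j : ℕ) * c j = ∑ j : Fin (k+1), c j * v i ^ (j : ℕ) from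
      Finset.sum_congr rfl fun j _ => mul_comm _ _]
    exact (hrow i).trans rfl
  have hdet : M.det ≠ 0 := by
    rw [Matrix.det_vandermonde]
    refine Finset.prod_ne_zero_iff.2 fun i _ => Finset.prod_ne_zero_iff.2 fun j hj => ?_
    rw [Finset.mem_Ioi] at hj
    refine sub_ne_zero.2 fun h => ?_
    exact absurd (hvinj h) (ne_of_gt hj)
  have hzero : M.det • c = 0 := by
    have h1 : (M.adjugate * M).mulVec c = M.det • c := by
      rw [Matrix.adjugate_mul, Matrix.smul_mulVec, Matrix.one_mulVec]
    rw [← h1, ← Matrix.mulVec_mulVec, hMc, Matrix.mulVec_zero]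
  intro j
  have := congrFun hzero j
  simp only [Pi.smul_apply, Pi.zero_apply, smul_eq_mul] at this
  rcases mul_eq_zero.1 this with h | h
  · exact absurd h hdet
  · exact h

include hk in
/-- The step: extending a basis of `R` over the `S_k`-invariants to one over the
`S_{k+1}`-invariants, multiplying by powers of `x_k`. -/
lemma step (hk1 : 1 ≤ k) {ι : Type} [Fintype ι]
    (b : Module.Basis ι (fixSub n k) (MvPolynomial (Fin n) ℂ)) :
    Nonempty (Module.Basis (ι × Fin (k+1)) (fixSub n (k+1)) (MvPolynomial (Fin n) ℂ)) := by
  classical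
  set R := MvPolynomial (Fin n) ℂ
  set v : ι × Fin (k+1) → R := fun tj => xk n k hk ^ (tj.2 : ℕ) * b tj.1 with hvdef
  have hli : LinearIndependent (fixSub n (k+1)) v := by
    rw [Fintype.linearIndependent_iff]
    intro g hg
    have hmem : ∀ t : ι, (∑ j : Fin (k+1), (g (t,j) : R) * xk n k hk ^ (j : ℕ)) ∈ fixSub n k := by
      intro t
      exact sum_mem fun j _ => mul_mem (fixSub_le n (g (t,j)).2)
        (pow_mem (xk_mem_fix n k hk) _)
    set d : ι → fixSub n k := fun t => ⟨_, hmem t⟩ with hd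
    have hre : ∑ tj : ι × Fin (k+1), g tj • v tj = ∑ t : ι, d t • b t := by
      rw [Fintype.sum_prod_type]
      refine Finset.sum_congr rfl fun t _ => ?_
      rw [subalg_smul]
      show ∑ j : Fin (k+1), g (t,j) • (xk n k hk ^ (j:ℕ) * b t)
        = (∑ j : Fin (k+1), (g (t,j) : R) * xk n k hk ^ (j : ℕ)) * b t
      rw [Finset.sum_mul]
      refine Finset.sum_congr rfl fun j _ => ?_
      rw [subalg_smul]; ring
    rw [hre] at hg
    have hd0 : ∀ t, d t = 0 := Fintype.linearIndependent_iff.1 b.linearIndependent d hg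
    intro tj
    obtain ⟨t, j⟩ := tj
    have hsum0 : ∑ j : Fin (k+1), (g (t,j) : R) * xk n k hk ^ (j : ℕ) = 0 := by
      have := hd0 t
      rwa [hd, Subtype.ext_iff] at this
    have := vandermonde_indep n k hk (fun j => (g (t,j) : R))
      (fun j => (g (t,j)).2) hsum0 j
    exact Subtype.ext this
  have hsp : ⊤ ≤ Submodule.span (fixSub n (k+1)) (Set.range v) := by
    set W := Submodule.span (fixSub n (k+1)) (Set.range v) with hW
    have hPW : ∀ x ∈ P n k hk, ∀ t : ι, x * b t ∈ W := by
      intro x hx t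
      refine Submodule.span_induction ?_ ?_ ?_ ?_ hx
      · rintro y ⟨m, rfl⟩
        exact Submodule.subset_span ⟨(t, m), rfl⟩
      · simp
      · intro x y _ _ hx hy
        rw [add_mul]; exact Submodule.add_mem _ hx hy
      · intro a x _ hx
        rw [smul_mul_assoc]; exact Submodule.smul_mem _ _ hx
    have hWx : ∀ w ∈ W, xk n k hk * w ∈ W := by
      intro w hw
      refine Submodule.span_induction ?_ ?_ ?_ ?_ hw
      · rintro y ⟨⟨t, j⟩, rfl⟩
        show xk n k hk * (xk n k hk ^ (j:ℕ) * b t) ∈ W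
        rw [← mul_assoc, ← pow_succ']
        exact hPW _ (xk_pow_mem_P n k hk _) t
      · simp
      · intro x y _ _ hx hy
        rw [mul_add]; exact Submodule.add_mem _ hx hy
      · intro a x _ hx
        rw [mul_smul_comm]; exact Submodule.smul_mem _ _ hx
    have hWP : ∀ x ∈ P n k hk, ∀ w ∈ W, x * w ∈ W := by
      intro x hx
      refine Submodule.span_induction ?_ ?_ ?_ ?_ hx
      · rintro y ⟨m, rfl⟩
        intro w hw
        show xk n k hk ^ (m : ℕ) * w ∈ W
        induction (m : ℕ) with
        | zero => simpa using hw
        | succ i ih =>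
          rw [pow_succ', mul_assoc]
          exact hWx _ ih
      · intro w hw; rw [zero_mul]; exact Submodule.zero_mem _
      · intro x y _ _ hx hy w hw
        rw [add_mul]; exact Submodule.add_mem _ (hx w hw) (hy w hw)
      · intro a x _ hx w hw
        rw [smul_mul_assoc]; exact Submodule.smul_mem _ _ (hx w hw)
    intro p _
    have hpb : p ∈ Submodule.span (fixSub n k) (Set.range b) := b.mem_span p
    refine Submodule.span_induction ?_ ?_ ?_ ?_ hpb
    · rintro y ⟨t, rfl⟩
      have : b t = v (t, (0 : Fin (k+1))) := by
        rw [hvdef]; simp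
      rw [this]
      exact Submodule.subset_span ⟨(t, 0), rfl⟩
    · exact Submodule.zero_mem _
    · intro x y _ _ hx hy
      exact Submodule.add_mem _ hx hy
    · intro a x _ hx
      rw [subalg_smul]
      exact hWP _ (fix_mem_P_of_fix n k hk hk1 a.2) _ hx
  exact ⟨Module.Basis.mk hli hsp⟩

end Step

lemma base_case (hn : 1 ≤ n) :
    Nonempty (Module.Basis (Fin 1) (fixSub n 1) (MvPolynomial (Fin n) ℂ)) := by
  have htop : ∀ p : MvPolynomial (Fin n) ℂ, p ∈ fixSub n 1 := by
    intro p
    rw [fixSub_one_eq_top n hn]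
    trivial
  set v : Fin 1 → MvPolynomial (Fin n) ℂ := fun _ => 1 with hv
  have hli : LinearIndependent (fixSub n 1) v := by
    rw [Fintype.linearIndependent_iff]
    intro g hg
    intro i
    have h0 : g 0 • (1 : MvPolynomial (Fin n) ℂ) = 0 := by
      rw [← hg, Fin.sum_univ_one]
    rw [subalg_smul, mul_one] at h0
    have := Fin.eq_zero i
    rw [this]
    exact Subtype.ext h0
  have hsp : ⊤ ≤ Submodule.span (fixSub n 1) (Set.range v) := by
    intro p _
    have : p = (⟨p, htop p⟩ : fixSub n 1) • (1 : MvPolynomial (Fin n) ℂ) := by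
      rw [subalg_smul, mul_one]
    rw [this]
    exact Submodule.smul_mem _ _ (Submodule.subset_span ⟨0, rfl⟩)
  exact ⟨Module.Basis.mk hli hsp⟩

lemma free_fixSub : ∀ k, 1 ≤ k → k ≤ n →
    Nonempty (Module.Basis (Fin (Nat.factorial k)) (fixSub n k) (MvPolynomial (Fin n) ℂ)) := by
  intro k
  induction k with
  | zero => omega
  | succ k ih =>
    intro _ hkn
    rcases Nat.eq_zero_or_pos k with rfl | hk1
    · exact base_case n hkn
    · obtain ⟨b⟩ := ih hk1 (Nat.le_of_succ_le hkn)
      obtain ⟨b'⟩ := step n k hkn hk1 b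
      refine ⟨b'.reindex (Fintype.equivFinOfCardEq ?_)⟩
      simp [Nat.factorial_succ]
      ring

end
end SymmFree

/-- `End_Λ(R) ≅ M_{n!}(Λ)` as `Λ`-algebras, where `R = ℂ[x_1,…,x_n]`
and `Λ` is the subalgebra of symmetric polynomials. -/
theorem end_of_polynomials_over_symmetric_iso_matrix (n : ℕ) (hn : 1 ≤ n) :
    Nonempty
      (Module.End (symmetricSubalgebra (Fin n) ℂ) (MvPolynomial (Fin n) ℂ)
          ≃ₐ[symmetricSubalgebra (Fin n) ℂ]
        Matrix (Fin (Nat.factorial n)) (Fin (Nat.factorial n))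
          (symmetricSubalgebra (Fin n) ℂ)) := by
  obtain ⟨b⟩ := SymmFree.free_fixSub n n hn (le_refl n)
  rw [SymmFree.fixSub_eq_symmetric n] at b
  exact ⟨algEquivMatrix b⟩
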